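/- arXiv:1808.05604 — 3 statements merged into one kernel-verified Lean document; each statement's English description precedes it below -/
import Mathlib

section
/- Every eigenvalue λ ∈ ℂ of the matrix J(θ) (with |θ_i − θ_j| < π/2 and nonnegative weights) has nonnegative real part: Re(λ) ≥ 0. -/
open Finset Matrix

theorem stmt_5 (N : ℕ) (γ : Fin N → Fin N → ℝ) (hγ : ∀ i j, 0 ≤ γ i j)
    (θ : Fin N → ℝ) (hθ : ∀ i j, |θ i - θ j| < Real.pi / 2)
    (J : Matrix (Fin N) (Fin N) ℝ)
    (hJ : ∀ i j, J i j =
      if i = j then ∑ k ∈ univ.filter (fun k => k ≠ i), γ i k * Real.cos (θ i - θ k)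
      else -γ i j * Real.cos (θ i - θ j)) :
    ∀ (μ : ℂ) (v : Fin N → ℂ), v ≠ 0 →
      (J.map (Complex.ofReal)) *ᵥ v = μ • v → 0 ≤ μ.re := by
  intro μ v hv hmul
  have hcos : ∀ i j, 0 ≤ Real.cos (θ i - θ j) := fun i j =>
    (Real.cos_pos_of_mem_Ioo ⟨neg_lt_of_abs_lt (hθ i j), lt_of_abs_lt (hθ i j)⟩).le
  have heig : Module.End.HasEigenvalue (Matrix.toLin' (J.map (Complex.ofReal))) μ := by
    apply Module.End.hasEigenvalue_of_hasEigenvector (x := v)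
    exact ⟨Module.End.mem_eigenspace_iff.mpr (by rw [Matrix.toLin'_apply, hmul]), hv⟩
  obtain ⟨i, hi⟩ := eigenvalue_mem_ball heig
  rw [Metric.mem_closedBall, Complex.dist_eq] at hi
  have hrad : (∑ j ∈ Finset.univ.erase i, ‖(J.map (Complex.ofReal)) i j‖) = J i i := by
    rw [hJ i i, if_pos rfl, ← Finset.filter_ne']
    refine Finset.sum_congr rfl fun j hj => ?_
    simp only [Finset.mem_filter] at hj
    rw [Matrix.map_apply, Complex.norm_real, hJ i j, if_neg (Ne.symm hj.2)]
    rw [neg_mul, norm_neg, Real.norm_of_nonneg (mul_nonneg (hγ i j) (hcos i j))]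
  rw [hrad] at hi
  have h1 : |μ.re - J i i| ≤ ‖μ - (J i i : ℂ)‖ := by
    have := Complex.abs_re_le_norm (μ - (J i i : ℂ))
    simpa using this
  have := abs_le.mp (h1.trans hi)
  linarith [this.1]
end

section
/- If a real N×N matrix J has nonpositive off-diagonal entries, J·1 = 0 (zero row sums), every eigenvalue of J has nonnegative real part, and the matrix obtained by deleting any one row and the corresponding column of J is invertible, then the kernel of J (as a linear map on ℝ^N) is exactly the span of the all-ones vector 1. -/
open Finset Matrix

theorem stmt_14 (N : ℕ) (J : Matrix (Fin (N + 1)) (Fin (N + 1)) ℝ)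
    (hoff : ∀ i j, i ≠ j → J i j ≤ 0)
    (hrow : J *ᵥ (fun _ => (1 : ℝ)) = 0)
    (heig : ∀ (μ : ℂ) (w : Fin (N + 1) → ℂ), w ≠ 0 →
      (J.map (Complex.ofReal)) *ᵥ w = μ • w → 0 ≤ μ.re)
    (hinv : ∃ i : Fin (N + 1), IsUnit (J.submatrix i.succAbove i.succAbove)) :
    LinearMap.ker J.mulVecLin = Submodule.span ℝ {fun _ => (1 : ℝ)} := by
  obtain ⟨i, hJi⟩ := hinv
  apply le_antisymm
  · intro v hv
    have hv' : J *ᵥ v = 0 := hv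
    set u : Fin (N + 1) → ℝ := v - (v i) • (fun _ => (1 : ℝ)) with hu
    have hJu : J *ᵥ u = 0 := by
      rw [hu, Matrix.mulVec_sub, Matrix.mulVec_smul, hv', hrow, smul_zero, sub_zero]
    have hui : u i = 0 := by simp [hu]
    have hsub : J.submatrix i.succAbove i.succAbove *ᵥ (u ∘ i.succAbove) = 0 := by
      funext j
      have h1 : (J *ᵥ u) (i.succAbove j) = 0 := by rw [hJu]; rfl
      have h2 : (J *ᵥ u) (i.succAbove j)
          = J (i.succAbove j) i * u i
            + ∑ k, J (i.succAbove j) (i.succAbove k) * u (i.succAbove k) := by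
        rw [Matrix.mulVec, dotProduct, Fin.sum_univ_succAbove _ i]
      simp only [hui, mul_zero, zero_add] at h2
      have : (J.submatrix i.succAbove i.succAbove *ᵥ (u ∘ i.succAbove)) j
          = ∑ k, J (i.succAbove j) (i.succAbove k) * u (i.succAbove k) := rfl
      rw [this, ← h2, h1]
      rfl
    have huz : u ∘ i.succAbove = 0 := by
      have hinj := Matrix.mulVec_injective_iff_isUnit.mpr hJi
      have : J.submatrix i.succAbove i.succAbove *ᵥ (u ∘ i.succAbove)
          = J.submatrix i.succAbove i.succAbove *ᵥ 0 := by
        rw [hsub, Matrix.mulVec_zero]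
      exact hinj this
    have hu0 : u = 0 := by
      funext k
      rcases eq_or_ne k i with rfl | hk
      · exact hui
      · obtain ⟨j, hj⟩ := Fin.exists_succAbove_eq hk
        rw [← hj]
        exact congrFun huz j
    have hveq : v = (v i) • (fun _ => (1 : ℝ)) := by
      have := sub_eq_zero.mp hu0
      exact this
    rw [hveq]
    exact Submodule.smul_mem _ _ (Submodule.subset_span rfl)
  · rw [Submodule.span_le, Set.singleton_subset_iff]
    exact hrow
end

section
/- Let P be an (N−1)×N real matrix whose rows form an orthonormal basis of the hyperplane 1^⊥ ⊆ ℝ^N. Then the (N−1)×(N−1) minor P_î obtained by deleting the i-th column of P satisfies |det(P_î)| = 1/√N for every i. -/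
open Finset Matrix

theorem stmt_15 (n : ℕ) (hn : 1 ≤ n) (P : Matrix (Fin n) (Fin (n + 1)) ℝ)
    (hPP : P * P.transpose = 1)
    (hP1 : P *ᵥ (fun _ => (1 : ℝ)) = 0) :
    ∀ i : Fin (n + 1),
      |(P.submatrix id i.succAbove).det| = 1 / Real.sqrt (n + 1) := by
  intro i
  set s : ℝ := Real.sqrt (n + 1) with hsdef
  have hNpos : (0:ℝ) < (n:ℝ) + 1 := by positivity
  have hs : 0 < s := Real.sqrt_pos.2 hNpos
  have hs2 : s * s = (n:ℝ) + 1 := Real.mul_self_sqrt (le_of_lt hNpos)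
  -- entry facts
  have hsum : ∀ j : Fin n, ∑ k, P j k = 0 := by
    intro j
    have := congrFun hP1 j
    simpa [Matrix.mulVec, dotProduct] using this
  have horth : ∀ j j' : Fin n, ∑ k, P j k * P j' k = if j = j' then (1:ℝ) else 0 := by
    intro j j'
    have := congrFun (congrFun hPP j) j'
    simpa [Matrix.mul_apply, Matrix.one_apply, Matrix.transpose_apply] using this
  -- the completed orthogonal matrix Q
  set Q : Matrix (Fin (n+1)) (Fin (n+1)) ℝ :=
    Matrix.of fun r c => Fin.lastCases s⁻¹ (fun j => P j c) r with hQdef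
  have hQcast : ∀ (j : Fin n) (c : Fin (n+1)), Q j.castSucc c = P j c := by
    intro j c; simp [hQdef]
  have hQlast : ∀ c : Fin (n+1), Q (Fin.last n) c = s⁻¹ := by
    intro c; simp [hQdef]
  -- Q is orthogonal
  have hQQ : Q * Q.transpose = 1 := by
    ext r c
    rw [Matrix.mul_apply]
    simp only [Matrix.transpose_apply]
    induction r using Fin.lastCases with
    | last =>
      induction c using Fin.lastCases with
      | last =>
        simp only [hQlast, Matrix.one_apply_eq]
        rw [Finset.sum_const, Finset.card_univ, Fintype.card_fin, nsmul_eq_mul]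
        push_cast
        rw [← hs2]
        field_simp
      | cast j =>
        have hne : Fin.last n ≠ j.castSucc := (Fin.castSucc_lt_last j).ne'
        simp only [hQlast, hQcast, Matrix.one_apply_ne hne, ← Finset.mul_sum, hsum, mul_zero]
    | cast j =>
      induction c using Fin.lastCases with
      | last =>
        have hne : j.castSucc ≠ Fin.last n := (Fin.castSucc_lt_last j).ne
        simp only [hQlast, hQcast, Matrix.one_apply_ne hne]
        simp [← Finset.sum_mul, hsum]
      | cast j' =>
        simp only [hQcast, horth]
        by_cases h : j = j'
        · subst h; simp [Matrix.one_apply_eq]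
        · have : j.castSucc ≠ j'.castSucc := by simpa using h
          simp [h, Matrix.one_apply_ne this]
  have hdetQ : |Q.transpose.det| = 1 := by
    have h1 : Q.det * Q.det = 1 := by
      have := congrArg Matrix.det hQQ
      rwa [Matrix.det_mul, Matrix.det_transpose, Matrix.det_one] at this
    rw [Matrix.det_transpose]
    rcases mul_self_eq_one_iff.mp h1 with h | h <;> simp [h]
  -- the matrix M : P with e_i appended as last row
  set M : Matrix (Fin (n+1)) (Fin (n+1)) ℝ :=
    Matrix.of fun r c => Fin.lastCases (if c = i then (1:ℝ) else 0) (fun j => P j c) r with hMdef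
  have hMcast : ∀ (j : Fin n) (c : Fin (n+1)), M j.castSucc c = P j c := by
    intro j c; simp [hMdef]
  have hMlast : ∀ c : Fin (n+1), M (Fin.last n) c = if c = i then (1:ℝ) else 0 := by
    intro c; simp [hMdef]
  -- M * Qᵀ is lower triangular with diagonal 1,...,1,s⁻¹
  have hMQ : (M * Q.transpose).BlockTriangular OrderDual.toDual := by
    intro r c hlt
    have hlt' : (r : Fin (n+1)) < c := hlt
    rw [Matrix.mul_apply]
    simp only [Matrix.transpose_apply]
    induction r using Fin.lastCases with
    | last =>
      exact absurd hlt' (not_lt.2 (Fin.le_last c))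
    | cast j =>
      induction c using Fin.lastCases with
      | last =>
        simp only [hMcast, hQlast]
        simp [← Finset.sum_mul, hsum]
      | cast j' =>
        have hjj : j ≠ j' := by
          rintro rfl; exact lt_irrefl _ hlt'
        simp [hMcast, hQcast, horth, hjj]
  have hdiag : ∀ r : Fin (n+1), (M * Q.transpose) r r =
      Fin.lastCases s⁻¹ (fun _ => (1:ℝ)) r := by
    intro r
    rw [Matrix.mul_apply]
    simp only [Matrix.transpose_apply]
    induction r using Fin.lastCases with
    | last =>
      simp only [hMlast, hQlast, Fin.lastCases_last, ite_mul, one_mul, zero_mul,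
        Finset.sum_ite_eq', Finset.mem_univ, if_true]
    | cast j =>
      simp [hMcast, hQcast, horth]
  have hdetMQ : (M * Q.transpose).det = s⁻¹ := by
    rw [Matrix.det_of_lowerTriangular _ hMQ]
    rw [Finset.prod_congr rfl (fun r _ => hdiag r)]
    rw [Fin.prod_univ_castSucc]
    simp
  have hdetM : |M.det| = s⁻¹ := by
    have : |M.det| * |Q.transpose.det| = |s⁻¹| := by
      rw [← abs_mul, ← Matrix.det_mul, hdetMQ]
    rw [hdetQ, mul_one] at this
    rwa [abs_of_pos (inv_pos.2 hs)] at this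
  -- expand det M along the last row
  have hexp : M.det = (-1 : ℝ) ^ ((Fin.last n : ℕ) + (i : ℕ)) *
      (M.submatrix (Fin.last n).succAbove i.succAbove).det := by
    rw [Matrix.det_succ_row M (Fin.last n)]
    rw [Finset.sum_eq_single i]
    · rw [hMlast]; simp
    · intro b _ hb
      rw [hMlast]; simp [hb]
    · simp
  have hsub : M.submatrix (Fin.last n).succAbove i.succAbove
      = P.submatrix id i.succAbove := by
    ext r c
    simp [Matrix.submatrix_apply, Fin.succAbove_last, hMcast]
  rw [hsub] at hexp
  rw [hexp] at hdetM
  rw [abs_mul, abs_pow, abs_neg, abs_one, one_pow, one_mul] at hdetM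
  rw [hdetM, one_div]
end
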